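/- There exists a constant C > 0 such that for all ξ, η ∈ ℝ³ with ξ ≠ 0 and ξ ≠ η, the Laplacian of Φ₁ in ξ, namely Δ_ξΦ₁(ξ,η) = (p''(|ξ|) + 2p'(|ξ|)/|ξ|) − (p''(|ξ−η|) + 2p'(|ξ−η|)/|ξ−η|), satisfies |Δ_ξΦ₁(ξ,η)| ≤ C·( |η| / (⟨max(|ξ−η|,|ξ|)⟩ · ⟨min(|ξ−η|,|ξ|)⟩³) + |η| / (|ξ−η|·|ξ|) ). -/

import Mathlib

noncomputable def q (r : ℝ) : ℝ := Real.sqrt ((2 + r ^ 2) / (1 + r ^ 2))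
noncomputable def p (r : ℝ) : ℝ := r * q r

noncomputable def Φ₁ (ξ η : EuclideanSpace ℝ (Fin 3)) : ℝ :=
  p ‖ξ‖ - p ‖ξ - η‖ - p ‖η‖


noncomputable def P1 (r : ℝ) : ℝ := ((1 + r ^ 2) ^ 2 + 1) / (q r * (1 + r ^ 2) ^ 2)
noncomputable def P2 (r : ℝ) : ℝ :=
  r * ((1 + r ^ 2) ^ 2 - 4 * (1 + r ^ 2) - 3) / (q r ^ 3 * (1 + r ^ 2) ^ 4)
noncomputable def g (r : ℝ) : ℝ :=
  (2 * (1 + r ^ 2) ^ 4 + 3 * (1 + r ^ 2) ^ 3 - 3 * (1 + r ^ 2) ^ 2 + 3 * (1 + r ^ 2) + 3) /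
    (q r ^ 3 * (1 + r ^ 2) ^ 4)
noncomputable def G (r : ℝ) : ℝ :=
  3 * r * (5 * (1 + r ^ 2) ^ 3 - 5 * (1 + r ^ 2) ^ 2 - 11 * (1 + r ^ 2) - 5) /
    (q r ^ 5 * (1 + r ^ 2) ^ 6)


lemma q_pos (r : ℝ) : 0 < q r := Real.sqrt_pos.mpr (by positivity)

lemma q_mul (r : ℝ) : q r ^ 2 * (1 + r ^ 2) = 2 + r ^ 2 := by
  have h : q r ^ 2 = (2 + r ^ 2) / (1 + r ^ 2) := Real.sq_sqrt (by positivity)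
  rw [h]; field_simp

lemma q_ge_one (r : ℝ) : 1 ≤ q r := by
  have h1 : 1 ≤ q r ^ 2 := by nlinarith [q_mul r, sq_nonneg r]
  nlinarith [h1, q_pos r]

lemma hq (r : ℝ) : HasDerivAt q (-r / (q r * (1 + r ^ 2) ^ 2)) r := by
  have hn : HasDerivAt (fun r : ℝ => 2 + r ^ 2) (2 * r) r := by
    simpa using (hasDerivAt_pow 2 r).const_add 2
  have hd : HasDerivAt (fun r : ℝ => 1 + r ^ 2) (2 * r) r := by
    simpa using (hasDerivAt_pow 2 r).const_add 1
  have h1 : HasDerivAt (fun r : ℝ => (2 + r ^ 2) / (1 + r ^ 2))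
      ((2 * r * (1 + r ^ 2) - (2 + r ^ 2) * (2 * r)) / (1 + r ^ 2) ^ 2) r :=
    hn.div hd (by positivity)
  have h2 := (Real.hasDerivAt_sqrt (x := (2 + r ^ 2) / (1 + r ^ 2)) (by positivity)).comp r h1
  have hqr := q_pos r
  refine HasDerivAt.congr_deriv h2 (Eq.symm ?_)
  show -r / (q r * (1 + r ^ 2) ^ 2)
      = 1 / (2 * Real.sqrt ((2 + r ^ 2) / (1 + r ^ 2))) *
        ((2 * r * (1 + r ^ 2) - (2 + r ^ 2) * (2 * r)) / (1 + r ^ 2) ^ 2)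
  rw [show Real.sqrt ((2 + r ^ 2) / (1 + r ^ 2)) = q r from rfl]
  have h3 : (1 + r ^ 2) ≠ 0 := by positivity
  field_simp
  ring

lemma hu (r : ℝ) : HasDerivAt (fun r : ℝ => 1 + r ^ 2) (2 * r) r := by
  simpa using (hasDerivAt_pow 2 r).const_add 1

lemma hp (r : ℝ) : HasDerivAt p (P1 r) r := by
  have h := (hasDerivAt_id r).mul (hq r)
  refine HasDerivAt.congr_deriv h (Eq.symm ?_)
  have hq0 := (q_pos r).ne'
  have hu0 : (1 + r ^ 2) ≠ 0 := by positivity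
  unfold P1
  simp only [id]
  field_simp
  linear_combination (-(1 + r ^ 2)) * q_mul r

lemma hP1 (r : ℝ) : HasDerivAt P1 (P2 r) r := by
  have hn : HasDerivAt (fun r : ℝ => (1 + r ^ 2) ^ 2 + 1) (2 * (1 + r ^ 2) ^ 1 * (2 * r)) r :=
    ((hu r).pow 2).add_const 1
  have hd : HasDerivAt (fun r : ℝ => q r * (1 + r ^ 2) ^ 2)
      (-r / (q r * (1 + r ^ 2) ^ 2) * (1 + r ^ 2) ^ 2 + q r * (2 * (1 + r ^ 2) ^ 1 * (2 * r))) r :=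
    (hq r).mul ((hu r).pow 2)
  have hq0 := (q_pos r).ne'
  have hu0 : (1 + r ^ 2) ≠ 0 := by positivity
  have h := hn.div hd (by positivity)
  refine HasDerivAt.congr_deriv h (Eq.symm ?_)
  unfold P2
  have hQ := q_mul r
  field_simp
  linear_combination (4 * r) * q_mul r

lemma hg (r : ℝ) : HasDerivAt g (G r) r := by
  have h4 : HasDerivAt (fun r : ℝ => (1 + r ^ 2) ^ 4) (4 * (1 + r ^ 2) ^ 3 * (2 * r)) r :=
    (hu r).pow 4
  have h3 : HasDerivAt (fun r : ℝ => (1 + r ^ 2) ^ 3) (3 * (1 + r ^ 2) ^ 2 * (2 * r)) r :=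
    (hu r).pow 3
  have h2 : HasDerivAt (fun r : ℝ => (1 + r ^ 2) ^ 2) (2 * (1 + r ^ 2) ^ 1 * (2 * r)) r :=
    (hu r).pow 2
  have hn : HasDerivAt
      (fun r : ℝ => 2 * (1 + r ^ 2) ^ 4 + 3 * (1 + r ^ 2) ^ 3 - 3 * (1 + r ^ 2) ^ 2 +
        3 * (1 + r ^ 2) + 3)
      (2 * (4 * (1 + r ^ 2) ^ 3 * (2 * r)) + 3 * (3 * (1 + r ^ 2) ^ 2 * (2 * r)) -
        3 * (2 * (1 + r ^ 2) ^ 1 * (2 * r)) + 3 * (2 * r)) r :=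
    ((((h4.const_mul 2).add (h3.const_mul 3)).sub (h2.const_mul 3)).add
      ((hu r).const_mul 3)).add_const 3
  have hdq : HasDerivAt (fun r : ℝ => q r ^ 3)
      (3 * q r ^ 2 * (-r / (q r * (1 + r ^ 2) ^ 2))) r := by
    have h := (hq r).pow 3; simp at h; exact h
  have hd : HasDerivAt (fun r : ℝ => q r ^ 3 * (1 + r ^ 2) ^ 4)
      (3 * q r ^ 2 * (-r / (q r * (1 + r ^ 2) ^ 2)) * (1 + r ^ 2) ^ 4 +
        q r ^ 3 * (4 * (1 + r ^ 2) ^ 3 * (2 * r))) r := hdq.mul h4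
  have hq0 := (q_pos r).ne'
  have hu0 : (1 + r ^ 2) ≠ 0 := by positivity
  have h := hn.div hd (by positivity)
  refine HasDerivAt.congr_deriv h (Eq.symm ?_)
  unfold G
  field_simp
  linear_combination (r * (8 * ((1 + r ^ 2) * ((1 + r ^ 2) * ((1 + r ^ 2) * ((1 + r ^ 2) * 2 + 3) - 3) + 3) + 3) - 2 * (1 + r ^ 2) * ((1 + r ^ 2) * ((1 + r ^ 2) * ((1 + r ^ 2) * 2 * 4 + 3 ^ 2) - 3 * 2) + 3))) * q_mul r

lemma g_pos (r : ℝ) : 0 < g r := by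
  have hu1 : (1 : ℝ) ≤ 1 + r ^ 2 := by nlinarith [sq_nonneg r]
  have e3 : (1 + r ^ 2) ^ 2 ≤ (1 + r ^ 2) ^ 3 := pow_le_pow_right₀ hu1 (by norm_num)
  apply div_pos _ (mul_pos (pow_pos (q_pos r) 3) (by positivity))
  nlinarith [e3, pow_pos (show (0:ℝ) < 1 + r ^ 2 by positivity) 4, hu1]

lemma g_le (r : ℝ) : g r ≤ 11 := by
  have hu1 : (1 : ℝ) ≤ 1 + r ^ 2 := by nlinarith [sq_nonneg r]
  have hq3 : 1 ≤ q r ^ 3 := by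
    have := pow_le_pow_left₀ (zero_le_one) (q_ge_one r) 3
    simpa using this
  have h1 : (1 + r ^ 2) ^ 4 ≤ q r ^ 3 * (1 + r ^ 2) ^ 4 :=
    le_mul_of_one_le_left (by positivity) hq3
  have e3 : (1 + r ^ 2) ^ 3 ≤ (1 + r ^ 2) ^ 4 := pow_le_pow_right₀ hu1 (by norm_num)
  have e1 : (1 + r ^ 2) ≤ (1 + r ^ 2) ^ 4 := by
    calc (1 + r ^ 2) = (1 + r ^ 2) ^ 1 := (pow_one _).symm
    _ ≤ (1 + r ^ 2) ^ 4 := pow_le_pow_right₀ hu1 (by norm_num)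
  have e0 : (1 : ℝ) ≤ (1 + r ^ 2) ^ 4 := by linarith [e1, hu1]
  unfold g
  rw [div_le_iff₀ (by positivity)]
  nlinarith [h1, e3, e1, e0, sq_nonneg (1 + r ^ 2)]

lemma G_abs (x : ℝ) (hx : 0 ≤ x) : |G x| ≤ 78 * x / (1 + x ^ 2) ^ 3 := by
  have hu1 : (1 : ℝ) ≤ 1 + x ^ 2 := by nlinarith [sq_nonneg x]
  have hu0 : (0 : ℝ) < 1 + x ^ 2 := by positivity
  have hQ5 : 1 ≤ q x ^ 5 := by
    have := pow_le_pow_left₀ (zero_le_one) (q_ge_one x) 5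
    simpa using this
  have e3 : (1 + x ^ 2) ^ 2 ≤ (1 + x ^ 2) ^ 3 := pow_le_pow_right₀ hu1 (by norm_num)
  have e1 : (1 + x ^ 2) ≤ (1 + x ^ 2) ^ 3 := by
    calc (1 + x ^ 2) = (1 + x ^ 2) ^ 1 := (pow_one _).symm
    _ ≤ (1 + x ^ 2) ^ 3 := pow_le_pow_right₀ hu1 (by norm_num)
  have e0 : (1 : ℝ) ≤ (1 + x ^ 2) ^ 3 := by linarith [e1, hu1]
  have hS : 5 * (1 + x ^ 2) ^ 3 - 5 * (1 + x ^ 2) ^ 2 - 11 * (1 + x ^ 2) - 5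
      ≤ 26 * (1 + x ^ 2) ^ 3 := by nlinarith [e3, e1, e0]
  have hS2 : -(26 * (1 + x ^ 2) ^ 3)
      ≤ 5 * (1 + x ^ 2) ^ 3 - 5 * (1 + x ^ 2) ^ 2 - 11 * (1 + x ^ 2) - 5 := by
    nlinarith [e3, e1, e0]
  rw [abs_le]
  constructor
  · unfold G
    rw [neg_le, ← neg_div, div_le_div_iff₀ (mul_pos (pow_pos (q_pos x) 5) (by positivity))
      (show (0:ℝ) < (1 + x ^ 2) ^ 3 by positivity)]
    have m1 := mul_le_mul_of_nonneg_left hS2 (show (0:ℝ) ≤ 3 * x by positivity)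
    have m2 := mul_le_mul_of_nonneg_right m1 (show (0:ℝ) ≤ (1 + x ^ 2) ^ 3 by positivity)
    have m3 := mul_le_mul_of_nonneg_left hQ5 (show (0:ℝ) ≤ 78 * x * (1 + x ^ 2) ^ 6 by positivity)
    nlinarith [m2, m3]
  · unfold G
    rw [div_le_div_iff₀ (mul_pos (pow_pos (q_pos x) 5) (by positivity))
      (show (0:ℝ) < (1 + x ^ 2) ^ 3 by positivity)]
    have m1 := mul_le_mul_of_nonneg_left hS (show (0:ℝ) ≤ 3 * x by positivity)
    have m2 := mul_le_mul_of_nonneg_right m1 (show (0:ℝ) ≤ (1 + x ^ 2) ^ 3 by positivity)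
    have m3 := mul_le_mul_of_nonneg_left hQ5 (show (0:ℝ) ≤ 78 * x * (1 + x ^ 2) ^ 6 by positivity)
    nlinarith [m2, m3]

lemma F_eq (r : ℝ) (hr : r ≠ 0) : P2 r + 2 * P1 r / r = g r / r := by
  have hq0 := (q_pos r).ne'
  have hu0 : (1 + r ^ 2) ≠ 0 := by positivity
  unfold P1 P2 g
  field_simp
  linear_combination (2 * (1 + r ^ 2) * ((1 + r ^ 2) ^ 2 + 1)) * q_mul r

lemma hF' (r : ℝ) (hr : r ≠ 0) :
    HasDerivAt (fun s => g s / s) (G r / r - g r / r ^ 2) r := by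
  have h := (hg r).div (hasDerivAt_id r) hr
  refine HasDerivAt.congr_deriv h (Eq.symm ?_)
  simp only [id]
  field_simp

lemma Fd_bound (x m : ℝ) (hm : 0 < m) (hx : m ≤ x) :
    |G x / x - g x / x ^ 2| ≤ 78 / (1 + m ^ 2) ^ 3 + 11 / m ^ 2 := by
  have hx0 : 0 < x := hm.trans_le hx
  have hmx2 : m ^ 2 ≤ x ^ 2 := pow_le_pow_left₀ hm.le hx 2
  have h2 : |G x / x| ≤ 78 / (1 + m ^ 2) ^ 3 := by
    rw [abs_div, abs_of_pos hx0]
    calc |G x| / x ≤ (78 * x / (1 + x ^ 2) ^ 3) / x :=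
          (div_le_div_iff_of_pos_right hx0).mpr (G_abs x hx0.le)
      _ = 78 / (1 + x ^ 2) ^ 3 := by field_simp
      _ ≤ 78 / (1 + m ^ 2) ^ 3 := by
          apply div_le_div_of_nonneg_left (by norm_num) (by positivity)
          exact pow_le_pow_left₀ (by positivity) (by linarith) 3
  have h3 : |g x / x ^ 2| ≤ 11 / m ^ 2 := by
    rw [abs_of_pos (div_pos (g_pos x) (by positivity))]
    exact div_le_div₀ (by norm_num) (g_le x) (by positivity) hmx2
  calc |G x / x - g x / x ^ 2| ≤ |G x / x| + |g x / x ^ 2| := abs_sub _ _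
    _ ≤ 78 / (1 + m ^ 2) ^ 3 + 11 / m ^ 2 := by linarith

set_option maxHeartbeats 1000000 in
lemma main_est (a b e : ℝ) (ha : 0 < a) (hb : 0 < b) (hab : |a - b| ≤ e) :
    |g a / a - g b / b| ≤
      117 * (e / (Real.sqrt (1 + max b a ^ 2) * Real.sqrt (1 + min b a ^ 2) ^ 3) +
        e / (b * a)) := by
  have he : 0 ≤ e := (abs_nonneg _).trans hab
  set m := min b a with hmdef
  set M := max b a with hMdef
  have hm : 0 < m := lt_min hb ha
  have hM : 0 < M := hm.trans_le (min_le_max)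
  have hMm : M - m ≤ e := by
    rw [max_sub_min_eq_abs]; exact hab
  have hmM : m * M = b * a := min_mul_max b a
  have hma : m ≤ a := min_le_right b a
  have hmb : m ≤ b := min_le_left b a
  have haM : a ≤ M := le_max_right b a
  have hbM : b ≤ M := le_max_left b a
  have s1pos : 0 < Real.sqrt (1 + m ^ 2) := Real.sqrt_pos.mpr (by positivity)
  have s2pos : 0 < Real.sqrt (1 + M ^ 2) := Real.sqrt_pos.mpr (by positivity)
  have hT1 : 0 ≤ e / (Real.sqrt (1 + M ^ 2) * Real.sqrt (1 + m ^ 2) ^ 3) := by positivity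
  have hT2 : 0 ≤ e / (b * a) := by positivity
  rcases le_or_gt m (2 * e) with hc | hc
  · -- small m
    have hM3e : M ≤ 3 * e := by linarith
    have hga : |g a / a| ≤ 11 / m := by
      rw [abs_of_pos (div_pos (g_pos a) ha)]
      exact div_le_div₀ (by norm_num) (g_le a) hm hma
    have hgb : |g b / b| ≤ 11 / m := by
      rw [abs_of_pos (div_pos (g_pos b) hb)]
      exact div_le_div₀ (by norm_num) (g_le b) hm hmb
    have h1 : |g a / a - g b / b| ≤ 22 / m := by
      calc |g a / a - g b / b| ≤ |g a / a| + |g b / b| := abs_sub _ _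
        _ ≤ 22 / m := by
            have h22 : (22:ℝ) / m = 11 / m + 11 / m := by ring
            linarith
    have h2 : 22 / m ≤ 117 * e / (b * a) := by
      rw [← hmM, div_le_div_iff₀ hm (by positivity)]
      nlinarith [mul_le_mul_of_nonneg_left hM3e hm.le]
    calc |g a / a - g b / b| ≤ 117 * e / (b * a) := h1.trans h2
      _ = 117 * (e / (b * a)) := by ring
      _ ≤ 117 * (e / (Real.sqrt (1 + M ^ 2) * Real.sqrt (1 + m ^ 2) ^ 3) + e / (b * a)) := by
          nlinarith [hT1]
  · -- big m : MVT
    have hMle : M ≤ 3 / 2 * m := by linarith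
    set C0 := 78 / (1 + m ^ 2) ^ 3 + 11 / m ^ 2 with hC0
    have hC0nn : 0 ≤ C0 := by positivity
    have hmvt : ‖g a / a - g b / b‖ ≤ C0 * ‖a - b‖ := by
      apply (convex_Icc m M).norm_image_sub_le_of_norm_hasDerivWithin_le
        (f' := fun x => G x / x - g x / x ^ 2)
        (fun x hx => (hF' x (hm.trans_le hx.1).ne').hasDerivWithinAt)
        (fun x hx => by
          rw [Real.norm_eq_abs]; exact Fd_bound x m hm hx.1)
        ⟨hmb, hbM⟩ ⟨hma, haM⟩
    rw [Real.norm_eq_abs, Real.norm_eq_abs] at hmvt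
    have step1 : |g a / a - g b / b| ≤ C0 * e :=
      hmvt.trans (mul_le_mul_of_nonneg_left hab hC0nn)
    -- compare C0 * e with RHS
    have hs1sq : Real.sqrt (1 + m ^ 2) ^ 2 = 1 + m ^ 2 := Real.sq_sqrt (by positivity)
    have hs1ge1 : 1 ≤ Real.sqrt (1 + m ^ 2) := by
      nlinarith [hs1sq, s1pos, sq_nonneg m]
    have hs2le : Real.sqrt (1 + M ^ 2) ≤ 3 / 2 * Real.sqrt (1 + m ^ 2) := by
      have h9 : 1 + M ^ 2 ≤ (3 / 2) ^ 2 * (1 + m ^ 2) := by nlinarith [hMle, hm, hc, he]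
      calc Real.sqrt (1 + M ^ 2) ≤ Real.sqrt ((3 / 2) ^ 2 * (1 + m ^ 2)) :=
            Real.sqrt_le_sqrt h9
        _ = 3 / 2 * Real.sqrt (1 + m ^ 2) := by
            rw [Real.sqrt_mul (by positivity), Real.sqrt_sq (by norm_num)]
    have goalA : 78 / (1 + m ^ 2) ^ 3 * e
        ≤ 117 * (e / (Real.sqrt (1 + M ^ 2) * Real.sqrt (1 + m ^ 2) ^ 3)) := by
      have hden : (1 + m ^ 2) ^ 3 = Real.sqrt (1 + m ^ 2) ^ 6 := by
        rw [show Real.sqrt (1 + m ^ 2) ^ 6 = (Real.sqrt (1 + m ^ 2) ^ 2) ^ 3 by ring, hs1sq]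
      have lrw : 78 / (1 + m ^ 2) ^ 3 * e = 78 * e / (1 + m ^ 2) ^ 3 := by ring
      have rrw : 117 * (e / (Real.sqrt (1 + M ^ 2) * Real.sqrt (1 + m ^ 2) ^ 3))
          = 117 * e / (Real.sqrt (1 + M ^ 2) * Real.sqrt (1 + m ^ 2) ^ 3) := by ring
      rw [lrw, rrw, hden, div_le_div_iff₀ (by positivity) (by positivity)]
      have t1 : Real.sqrt (1 + M ^ 2) * Real.sqrt (1 + m ^ 2) ^ 3
          ≤ 3 / 2 * Real.sqrt (1 + m ^ 2) ^ 4 := by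
        have := mul_le_mul_of_nonneg_right hs2le (pow_nonneg s1pos.le 3)
        nlinarith [this]
      have t2 : Real.sqrt (1 + m ^ 2) ^ 4 ≤ Real.sqrt (1 + m ^ 2) ^ 6 :=
        pow_le_pow_right₀ hs1ge1 (by norm_num)
      have t3 : Real.sqrt (1 + M ^ 2) * Real.sqrt (1 + m ^ 2) ^ 3
          ≤ 3 / 2 * Real.sqrt (1 + m ^ 2) ^ 6 := by linarith
      nlinarith [mul_le_mul_of_nonneg_left t3 (show (0:ℝ) ≤ 78 * e by positivity)]
    have goalB : 11 / m ^ 2 * e ≤ 117 * (e / (b * a)) := by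
      have lrw : 11 / m ^ 2 * e = 11 * e / m ^ 2 := by ring
      have rrw : 117 * (e / (b * a)) = 117 * e / (b * a) := by ring
      rw [lrw, rrw, ← hmM, div_le_div_iff₀ (by positivity) (by positivity)]
      have u1 : m * M ≤ 3 / 2 * (m * m) := by nlinarith [hMle, hm]
      nlinarith [mul_le_mul_of_nonneg_left u1 (show (0:ℝ) ≤ 11 * e by positivity),
        mul_pos hm hm, he]
    calc |g a / a - g b / b| ≤ C0 * e := step1
      _ = 78 / (1 + m ^ 2) ^ 3 * e + 11 / m ^ 2 * e := by rw [hC0]; ring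
      _ ≤ 117 * (e / (Real.sqrt (1 + M ^ 2) * Real.sqrt (1 + m ^ 2) ^ 3))
          + 117 * (e / (b * a)) := by linarith
      _ = 117 * (e / (Real.sqrt (1 + M ^ 2) * Real.sqrt (1 + m ^ 2) ^ 3) + e / (b * a)) := by
          ring


theorem stmt10 :
    ∃ C : ℝ, 0 < C ∧
      ∀ ξ η : EuclideanSpace ℝ (Fin 3), ξ ≠ 0 → ξ ≠ η →
        |(deriv (deriv p) ‖ξ‖ + 2 * deriv p ‖ξ‖ / ‖ξ‖) -
            (deriv (deriv p) ‖ξ - η‖ + 2 * deriv p ‖ξ - η‖ / ‖ξ - η‖)| ≤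
          C * (‖η‖ / (Real.sqrt (1 + max ‖ξ - η‖ ‖ξ‖ ^ 2) *
                Real.sqrt (1 + min ‖ξ - η‖ ‖ξ‖ ^ 2) ^ 3) +
              ‖η‖ / (‖ξ - η‖ * ‖ξ‖)) := by
  refine ⟨117, by norm_num, ?_⟩
  intro ξ η hξ hξη
  have ha : 0 < ‖ξ‖ := norm_pos_iff.mpr hξ
  have hb : 0 < ‖ξ - η‖ := norm_pos_iff.mpr (sub_ne_zero.mpr hξη)
  have hdp : deriv p = P1 := funext fun r => (hp r).deriv
  have hddp : deriv (deriv p) = P2 := by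
    rw [hdp]; exact funext fun r => (hP1 r).deriv
  have habe : |‖ξ‖ - ‖ξ - η‖| ≤ ‖η‖ := by
    have h := abs_norm_sub_norm_le ξ (ξ - η)
    simpa using h
  rw [hddp, hdp, F_eq _ ha.ne', F_eq _ hb.ne']
  exact main_est ‖ξ‖ ‖ξ - η‖ ‖η‖ ha hb habe
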